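/- Let A = ℤ[[q−1]] be the power series ring over ℤ in the variable q−1 (so A = PowerSeries ℤ with q := 1 + X, a unit of A). For n ∈ ℤ set [n]_q := (q^n − 1)/(q − 1) ∈ A, which is well defined since q is a unit and q−1 divides q^n−1 for every n ∈ ℤ (for n ≥ 0, [n]_q = 1 + q + ⋯ + q^{n−1}). Let ∇_q be the A-linear endomorphism of the module A[T, T^{-1}] of Laurent polynomials over A determined by ∇_q(T^n) = [n]_q·T^{n−1} for all n ∈ ℤ. Then the cokernel of ∇_q is isomorphic, as an A-module, to A ⊕ ⨁_{n ∈ ℤ, n ≠ −1} A/([n+1]_q·A). -/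

import Mathlib

open DirectSum

noncomputable section CokerAux

abbrev Dtgt (b : ℤ → PowerSeries ℤ) :=
  ⨁ (n : {m : ℤ // m ≠ -1}), PowerSeries ℤ ⧸ Ideal.span {b ((n : ℤ) + 1)}

def gb (b : ℤ → PowerSeries ℤ) (m : ℤ) : PowerSeries ℤ →ₗ[PowerSeries ℤ] Dtgt b :=
  if h : m = -1 then 0 else
    (DirectSum.lof (PowerSeries ℤ) {m : ℤ // m ≠ -1}
      (fun i => PowerSeries ℤ ⧸ Ideal.span {b ((i : ℤ) + 1)}) ⟨m, h⟩).comp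
      (Ideal.span {b (m + 1)}).mkQ

def phi2 (b : ℤ → PowerSeries ℤ) :
    LaurentPolynomial (PowerSeries ℤ) →ₗ[PowerSeries ℤ] Dtgt b :=
  (Finsupp.lsum ℕ (gb b)).comp (AddMonoidAlgebra.coeffLinearEquiv (PowerSeries ℤ)).toLinearMap

lemma phi2_component (b : ℤ → PowerSeries ℤ) (f : LaurentPolynomial (PowerSeries ℤ))
    (i : {m : ℤ // m ≠ -1}) :
    DirectSum.component (PowerSeries ℤ) _ _ i (phi2 b f) =
      Submodule.Quotient.mk (f.coeff (i : ℤ)) := by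
  classical
  have h1 : phi2 b f = Finsupp.sum f.coeff fun m a => gb b m a := rfl
  rw [h1, map_finsuppSum]
  rw [Finsupp.sum_eq_single (i : ℤ)]
  · rw [gb, dif_neg i.2]
    simp only [LinearMap.comp_apply, Submodule.mkQ_apply]
    exact DirectSum.component.lof_self (R := PowerSeries ℤ) (i := i) _
  · intro m _ hm
    rw [gb]
    split_ifs with h
    · simp
    · simp only [LinearMap.comp_apply, Submodule.mkQ_apply]
      rw [DirectSum.component.of, dif_neg]
      intro hc
      exact hm (congrArg Subtype.val hc)
  · simp

lemma phi2_single (b : ℤ → PowerSeries ℤ) (n : ℤ) (a : PowerSeries ℤ) :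
    phi2 b (AddMonoidAlgebra.single n a) = gb b n a := by
  classical
  refine DirectSum.ext_component (PowerSeries ℤ) fun j => ?_
  rw [phi2_component, AddMonoidAlgebra.coeff_single]
  by_cases h : n = -1
  · subst h
    rw [gb, dif_pos rfl]
    rw [Finsupp.single_eq_of_ne' (fun hc => j.2 hc.symm)]
    simp
  · rw [gb, dif_neg h]
    simp only [LinearMap.comp_apply, Submodule.mkQ_apply]
    rw [DirectSum.component.of]
    by_cases hj : (⟨n, h⟩ : {m : ℤ // m ≠ -1}) = j
    · rw [dif_pos hj]
      subst hj
      rw [Finsupp.single_eq_same]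
    · rw [dif_neg hj, Finsupp.single_eq_of_ne' (fun hc => hj (Subtype.ext hc))]
      simp

def phi (b : ℤ → PowerSeries ℤ) :
    LaurentPolynomial (PowerSeries ℤ) →ₗ[PowerSeries ℤ] (PowerSeries ℤ × Dtgt b) :=
  ((Finsupp.lapply (-1)).comp (AddMonoidAlgebra.coeffLinearEquiv (PowerSeries ℤ)).toLinearMap).prod (phi2 b)

lemma single_eq_smul_T (n : ℤ) (a : PowerSeries ℤ) :
    (AddMonoidAlgebra.single n a : LaurentPolynomial (PowerSeries ℤ)) = a • LaurentPolynomial.T n := by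
  rw [LaurentPolynomial.T, AddMonoidAlgebra.smul_single, smul_eq_mul, mul_one]

lemma nabla_coeff (b : ℤ → PowerSeries ℤ)
    (nabla : LaurentPolynomial (PowerSeries ℤ) →ₗ[PowerSeries ℤ]
      LaurentPolynomial (PowerSeries ℤ))
    (hnabla : ∀ n : ℤ, nabla (LaurentPolynomial.T n) = b n • LaurentPolynomial.T (n - 1))
    (f : LaurentPolynomial (PowerSeries ℤ)) (m : ℤ) :
    (nabla f).coeff m = b (m + 1) * f.coeff (m + 1) := by
  classical
  induction f using AddMonoidAlgebra.induction with
  | zero => simp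
  | single_add n a f _ _ ih =>
    have hadd : nabla (AddMonoidAlgebra.single n a + f) = nabla (AddMonoidAlgebra.single n a) + nabla f :=
      map_add _ _ _
    have hsingle : (nabla (AddMonoidAlgebra.single n a)).coeff m = b (m+1) * (AddMonoidAlgebra.single n a).coeff (m+1) := by
      rw [single_eq_smul_T, map_smul, hnabla n, smul_smul]
      rw [← single_eq_smul_T, ← single_eq_smul_T]
      rw [AddMonoidAlgebra.coeff_single, AddMonoidAlgebra.coeff_single, Finsupp.single_apply, Finsupp.single_apply]
      rcases eq_or_ne n (m+1) with h|h
      · subst h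
        rw [if_pos (by omega : m + 1 - 1 = m), if_pos rfl]
        ring
      · rw [if_neg (by omega), if_neg h, mul_zero]
    rw [hadd]
    have h1 : (nabla (AddMonoidAlgebra.single n a) + nabla f).coeff m
        = (nabla (AddMonoidAlgebra.single n a)).coeff m + (nabla f).coeff m := Finsupp.add_apply _ _ _
    rw [h1, hsingle, ih]
    have h2 : (AddMonoidAlgebra.single n a + f).coeff (m+1) = (AddMonoidAlgebra.single n a).coeff (m+1) + f.coeff (m+1) :=
      Finsupp.add_apply _ _ _
    rw [h2, mul_add]

end CokerAux

/-- `q = 1 + (q-1)` is a unit of `ℤ[[q-1]]`. -/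
theorem q_isUnit : IsUnit (1 + PowerSeries.X : PowerSeries ℤ) := by
  rw [PowerSeries.isUnit_iff_constantCoeff]
  simp

theorem coker_q_deRham_Gm
    (b : ℤ → PowerSeries ℤ)
    (hb : ∀ n : ℤ, b n * ((1 + PowerSeries.X) - 1) =
      ((q_isUnit.unit ^ n : (PowerSeries ℤ)ˣ) : PowerSeries ℤ) - 1)
    (nabla : LaurentPolynomial (PowerSeries ℤ) →ₗ[PowerSeries ℤ]
          LaurentPolynomial (PowerSeries ℤ))
    (hnabla : ∀ n : ℤ, nabla (LaurentPolynomial.T n) = b n • LaurentPolynomial.T (n - 1)) :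
    Nonempty ((LaurentPolynomial (PowerSeries ℤ) ⧸ LinearMap.range nabla) ≃ₗ[PowerSeries ℤ]
      (PowerSeries ℤ ×
        ⨁ (n : {m : ℤ // m ≠ -1}), PowerSeries ℤ ⧸ Ideal.span {b ((n : ℤ) + 1)})) := by
  classical
  have hb0 : b 0 = 0 := by
    have h := hb 0
    rw [zpow_zero] at h
    simp only [Units.val_one, sub_self, add_sub_cancel_left] at h
    rcases mul_eq_zero.mp h with h' | h'
    · exact h'
    · exact absurd h' PowerSeries.X_ne_zero
  have hcoeff := nabla_coeff b nabla hnabla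
  have hker : LinearMap.ker (phi b) = LinearMap.range nabla := by
    apply le_antisymm
    · intro f hf
      rw [LinearMap.mem_ker] at hf
      have hf1 : f.coeff (-1) = 0 := by
        have := congrArg Prod.fst hf
        simpa [phi, LinearMap.prod_apply] using this
      have hf2' : phi2 b f = 0 := by
        have := congrArg Prod.snd hf
        simpa [phi, LinearMap.prod_apply] using this
      have hf2 : ∀ m : ℤ, m ≠ -1 → b (m+1) ∣ f.coeff m := by
        intro m hm
        have hc := phi2_component b f ⟨m, hm⟩
        rw [hf2', map_zero] at hc
        have hmem : f.coeff m ∈ Ideal.span {b (m+1)} := by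
          rwa [eq_comm, Submodule.Quotient.mk_eq_zero] at hc
        exact Ideal.mem_span_singleton.mp hmem
      have hdvd : ∀ k : ℤ, f.coeff (k-1) ≠ 0 → b k ∣ f.coeff (k-1) := by
        intro k hfk
        have hk : k - 1 ≠ -1 := by
          intro h
          exact hfk (by rw [h]; exact hf1)
        have := hf2 (k-1) hk
        rwa [sub_add_cancel] at this
      set c : ℤ → PowerSeries ℤ := fun k =>
        if hfk : f.coeff (k-1) = 0 then 0 else (hdvd k hfk).choose with hc_def
      have hcspec : ∀ k : ℤ, b k * c k = f.coeff (k-1) := by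
        intro k
        by_cases hfk : f.coeff (k-1) = 0
        · simp only [hc_def, dif_pos hfk, mul_zero, hfk]
        · simp only [hc_def, dif_neg hfk]
          exact ((hdvd k hfk).choose_spec).symm
      have hcsupp : ∀ k : ℤ, c k ≠ 0 → k ∈ f.coeff.support.image (· + 1) := by
        intro k hck
        have hfk : f.coeff (k-1) ≠ 0 := by
          intro h
          exact hck (by simp only [hc_def, dif_pos h])
        exact Finset.mem_image.mpr ⟨k - 1, Finsupp.mem_support_iff.mpr hfk, by ring⟩
      refine ⟨AddMonoidAlgebra.ofCoeff (Finsupp.onFinset (f.coeff.support.image (· + 1)) c hcsupp), ?_⟩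
      apply LaurentPolynomial.ext
      intro m
      rw [hcoeff]
      have : (AddMonoidAlgebra.ofCoeff (Finsupp.onFinset (f.coeff.support.image (· + 1)) c hcsupp) : LaurentPolynomial (PowerSeries ℤ)).coeff (m+1) = c (m+1) :=
        rfl
      rw [this]
      simpa using hcspec (m+1)
    · rintro _ ⟨g, rfl⟩
      rw [LinearMap.mem_ker]
      have h1 : ((Finsupp.lapply (-1)).comp (AddMonoidAlgebra.coeffLinearEquiv (PowerSeries ℤ)).toLinearMap : _ →ₗ[PowerSeries ℤ] _) (nabla g) = 0 := by
        show (nabla g).coeff (-1) = 0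
        rw [hcoeff]
        norm_num [hb0]
      have h2 : phi2 b (nabla g) = 0 := by
        refine DirectSum.ext_component (PowerSeries ℤ) fun i => ?_
        rw [phi2_component, map_zero, Submodule.Quotient.mk_eq_zero, hcoeff]
        exact Ideal.mem_span_singleton.mpr (dvd_mul_right _ _)
      exact Prod.ext h1 h2
  have hsurj : Function.Surjective (phi b) := by
    rw [← LinearMap.range_eq_top, eq_top_iff]
    rintro ⟨a, d⟩ -
    have h1 : ((a, 0) : PowerSeries ℤ × Dtgt b) ∈ LinearMap.range (phi b) := by
      refine ⟨AddMonoidAlgebra.single (-1) a, Prod.ext ?_ ?_⟩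
      · exact Finsupp.single_eq_same
      · show phi2 b (AddMonoidAlgebra.single (-1) a) = 0
        rw [phi2_single, gb, dif_pos rfl]
        rfl
    have h2 : ((0, d) : PowerSeries ℤ × Dtgt b) ∈ LinearMap.range (phi b) := by
      induction d using DirectSum.induction_on with
      | zero => exact zero_mem _
      | of i x =>
        obtain ⟨cc, rfl⟩ := Submodule.Quotient.mk_surjective _ x
        refine ⟨AddMonoidAlgebra.single (i : ℤ) cc, Prod.ext ?_ ?_⟩
        · show (AddMonoidAlgebra.single ((i : ℤ)) cc).coeff (-1) = 0
          exact Finsupp.single_eq_of_ne' i.2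
        · show phi2 b (AddMonoidAlgebra.single (i : ℤ) cc) = _
          rw [phi2_single, gb, dif_neg i.2]
          rfl
      | add x y hx hy =>
        have : ((0, x + y) : PowerSeries ℤ × Dtgt b) = (0, x) + (0, y) := by simp
        rw [this]
        exact add_mem hx hy
    have : (a, d) = ((a, 0) : PowerSeries ℤ × Dtgt b) + (0, d) := by simp
    rw [this]
    exact add_mem h1 h2
  have e1 := Submodule.quotEquivOfEq (LinearMap.range nabla) (LinearMap.ker (phi b)) hker.symm
  have e2 := @LinearMap.quotKerEquivOfSurjective (PowerSeries ℤ) (LaurentPolynomial (PowerSeries ℤ)) (PowerSeries ℤ × Dtgt b) _ _ _ _ _ (phi b) hsurj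
  exact ⟨e1.trans e2⟩
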